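/- A stable linear order on ω with infinitely many small elements and infinitely many large elements has order type ω + ω*: the small elements under ≤_L form a suborder isomorphic to ω, and the large elements form a suborder isomorphic to ω* (the reverse of ω). -/
import Mathlib

private lemma aux_omega (L : LinearOrder ℕ)
    (hsmall : {x : ℕ | {y | L.lt y x}.Finite}.Infinite) :
    ∃ f : ℕ → ℕ, Set.range f = {x : ℕ | {y | L.lt y x}.Finite} ∧
      ∀ m n : ℕ, m < n → L.lt (f m) (f n) := by
  classical
  have hLtrans : ∀ {a b c : ℕ}, L.lt a b → L.lt b c → L.lt a c :=
    fun h1 h2 => @lt_trans ℕ L.toPartialOrder.toPreorder _ _ _ h1 h2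
  have hLirr : ∀ a : ℕ, ¬ L.lt a a := fun a => @lt_irrefl ℕ L.toPartialOrder.toPreorder a
  set S := {x : ℕ | {y | L.lt y x}.Finite} with hS
  let c : ℕ → ℕ := fun x => if h : {y | L.lt y x}.Finite then h.toFinset.card else 0
  have hc : ∀ {x : ℕ} (h : {y | L.lt y x}.Finite), c x = h.toFinset.card := by
    intro x h; simp [c, h]
  have hmono : ∀ x x', x ∈ S → x' ∈ S → L.lt x x' → c x < c x' := by
    intro x x' hx hx' hlt
    have hx1 : {y | L.lt y x}.Finite := hx
    have hx1' : {y | L.lt y x'}.Finite := hx'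
    rw [hc hx1, hc hx1']
    apply Finset.card_lt_card
    constructor
    · intro y hy
      simp only [Set.Finite.mem_toFinset, Set.mem_setOf_eq] at *
      exact hLtrans hy hlt
    · intro hsub
      have hx'mem : x ∈ hx1'.toFinset := by
        simp only [Set.Finite.mem_toFinset, Set.mem_setOf_eq]; exact hlt
      have := hsub hx'mem
      simp only [Set.Finite.mem_toFinset, Set.mem_setOf_eq] at this
      exact hLirr x this
  have hinj : ∀ x x', x ∈ S → x' ∈ S → c x = c x' → x = x' := by
    intro x x' hx hx' h
    rcases @lt_trichotomy ℕ L x x' with hl | he | hl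
    · exact absurd h (Nat.ne_of_lt (hmono _ _ hx hx' hl))
    · exact he
    · exact absurd h.symm (Nat.ne_of_lt (hmono _ _ hx' hx hl))
  have hpred : ∀ x y, x ∈ S → L.lt y x → y ∈ S := by
    intro x y hx hlt
    exact Set.Finite.subset hx (fun z hz => hLtrans hz hlt)
  have hstep : ∀ x n, x ∈ S → c x = n + 1 → ∃ y ∈ S, c y = n := by
    intro x n hx hcx
    have hx' : {y | L.lt y x}.Finite := hx
    rw [hc hx'] at hcx
    have hne : hx'.toFinset.Nonempty := by
      rw [← Finset.card_pos, hcx]; omega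
    obtain ⟨y, hy, hymax⟩ := @Finset.exists_max_image ℕ ℕ L hx'.toFinset id hne
    simp only [Set.Finite.mem_toFinset, Set.mem_setOf_eq] at hy
    have hyS : y ∈ S := hpred x y hx hy
    have hy' : {z | L.lt z y}.Finite := hyS
    refine ⟨y, hyS, ?_⟩
    rw [hc hy']
    have heq : hy'.toFinset = hx'.toFinset.erase y := by
      ext z
      simp only [Set.Finite.mem_toFinset, Set.mem_setOf_eq, Finset.mem_erase,
        Set.Finite.mem_toFinset, Set.mem_setOf_eq]
      constructor
      · intro hz
        exact ⟨fun h => hLirr y (h ▸ hz), hLtrans hz hy⟩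
      · rintro ⟨hzy, hzx⟩
        have hle : L.le z y := by
          have := hymax z (by simp only [Set.Finite.mem_toFinset, Set.mem_setOf_eq]; exact hzx)
          simpa using this
        exact @lt_of_le_of_ne ℕ L.toPartialOrder z y hle hzy
    have hymem : y ∈ hx'.toFinset := by
      simp only [Set.Finite.mem_toFinset, Set.mem_setOf_eq]; exact hy
    rw [heq, Finset.card_erase_of_mem hymem, hcx]
    omega
  have hdown : ∀ k n x, x ∈ S → c x = n + k → ∃ y ∈ S, c y = n := by
    intro k
    induction k with
    | zero => intro n x hx hcx; exact ⟨x, hx, hcx⟩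
    | succ k ih =>
      intro n x hx hcx
      obtain ⟨y, hy, hcy⟩ := hstep x (n + k) hx (by omega)
      exact ih n y hy hcy
  have himg : (c '' S).Infinite := hsmall.image (fun x hx y hy => hinj x y hx hy)
  have hall : ∀ n, ∃ x ∈ S, c x = n := by
    intro n
    have hex : ∃ m ∈ c '' S, n < m := by
      by_contra h
      push_neg at h
      exact himg (Set.Finite.subset (Set.finite_Iic n) (fun m hm => Set.mem_Iic.mpr (Nat.le_of_not_lt (h m hm))))
    obtain ⟨m, hm, hnm⟩ := hex
    obtain ⟨x, hx, hcx⟩ := hm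
    exact hdown (m - n) n x hx (by omega)
  choose f hfS hfc using hall
  refine ⟨f, ?_, ?_⟩
  · ext x
    constructor
    · rintro ⟨n, rfl⟩; exact hfS n
    · intro hx
      exact ⟨c x, (hinj _ _ (hfS (c x)) hx (hfc (c x))).symm ▸ rfl⟩
  · intro m n hmn
    rcases @lt_trichotomy ℕ L (f m) (f n) with hl | he | hl
    · exact hl
    · exact absurd (by rw [← hfc m, ← hfc n, he]) (Nat.ne_of_lt hmn)
    · have := hmono _ _ (hfS n) (hfS m) hl
      rw [hfc m, hfc n] at this; omega

/-- A stable linear order on ω with infinitely many small and infinitely many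
large elements has type ω + ω*: the small elements form a suborder isomorphic
to ω and the large elements a suborder isomorphic to ω*. -/
theorem stable_order_type_omega_plus_omega_star (L : LinearOrder ℕ)
    (hstable : ∀ x : ℕ, {y | L.lt y x}.Finite ∨ {y | L.lt x y}.Finite)
    (hsmall : {x : ℕ | {y | L.lt y x}.Finite}.Infinite)
    (hlarge : {x : ℕ | {y | L.lt x y}.Finite}.Infinite) :
    (∃ f : ℕ → ℕ, Set.range f = {x : ℕ | {y | L.lt y x}.Finite} ∧
      ∀ m n : ℕ, m < n → L.lt (f m) (f n)) ∧
    (∃ g : ℕ → ℕ, Set.range g = {x : ℕ | {y | L.lt x y}.Finite} ∧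
      ∀ m n : ℕ, m < n → L.lt (g n) (g m)) := by
  refine ⟨aux_omega L hsmall, ?_⟩
  letI L' : LinearOrder ℕ := @OrderDual.instLinearOrder ℕ L
  have hlarge' : {x : ℕ | {y | L'.lt y x}.Finite}.Infinite := hlarge
  obtain ⟨g, hg1, hg2⟩ := aux_omega L' hlarge'
  exact ⟨g, hg1, hg2⟩
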